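/- arXiv:1611.09637 — 5 statements merged into one kernel-verified Lean document; each statement's English description precedes it below -/
import Mathlib

section
/- For any connected graph G, the partition dimension of G is at most the metric dimension of G plus one. -/
open Configuration

/-- The incidence (Levi) graph of a point-line geometry. -/
def incGraph (P L : Type*) [Membership P L] : SimpleGraph (P ⊕ L) where
  Adj x y := match x, y with
    | Sum.inl p, Sum.inr l => p ∈ l
    | Sum.inr l, Sum.inl p => p ∈ l
    | _, _ => False
  symm := by constructor; rintro (p | l) (p' | l') h <;> simp_all
  loopless := by constructor; rintro (p | l) h <;> simp_all

/-- Distance from a vertex to a set of vertices (minimum distance to an element). -/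
noncomputable def setDist {V : Type*} (G : SimpleGraph V) (v : V) (S : Set V) : ℕ :=
  sInf (G.dist v '' S)

/-- An indexed family of sets is a resolving partition of the vertex set of `G`:
the classes are nonempty, pairwise disjoint, cover `V`, and the distance vectors
`i ↦ d(v, S i)` are pairwise distinct. -/
def IsResolvingPartition {V ι : Type*} (G : SimpleGraph V) (S : ι → Set V) : Prop :=
  (∀ i, (S i).Nonempty) ∧ (Pairwise fun i j => Disjoint (S i) (S j)) ∧
    (⋃ i, S i) = Set.univ ∧
    ∀ u v : V, (∀ i, setDist G u (S i) = setDist G v (S i)) → u = v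

/-- The partition dimension of a graph. -/
noncomputable def partitionDim {V : Type*} (G : SimpleGraph V) : ℕ :=
  sInf {k | ∃ S : Fin k → Set V, IsResolvingPartition G S}

/-- A set of vertices is a resolving set for `G`. -/
def IsResolvingSet {V : Type*} (G : SimpleGraph V) (W : Set V) : Prop :=
  ∀ u v : V, (∀ w ∈ W, G.dist u w = G.dist v w) → u = v

/-- The metric dimension of a graph. -/
noncomputable def metricDim {V : Type*} (G : SimpleGraph V) : ℕ :=
  sInf {k | ∃ W : Set V, W.ncard = k ∧ IsResolvingSet G W}

/-- The partition dimension of a connected graph is at most its metric dimension plus one. -/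
theorem pd_le_metricDim_add_one {V : Type*} [Fintype V] (G : SimpleGraph V)
    (hG : G.Connected) : partitionDim G ≤ metricDim G + 1 := by
  classical
  have hne : {k | ∃ W : Set V, W.ncard = k ∧ IsResolvingSet G W}.Nonempty := by
    refine ⟨(Set.univ : Set V).ncard, Set.univ, rfl, ?_⟩
    intro u v h
    have h0 := h v (Set.mem_univ v)
    rw [SimpleGraph.dist_self] at h0
    exact (hG.dist_eq_zero_iff).mp h0
  obtain ⟨W, hWcard, hWres⟩ := Nat.sInf_mem hne
  have hsingle : ∀ (u w : V), setDist G u ({w} : Set V) = G.dist u w := by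
    intro u w; simp [setDist]
  by_cases hc : (Wᶜ : Set V).Nonempty
  · -- classes: Wᶜ and singletons of elements of W
    have hcard : Nat.card W = metricDim G := by
      rw [Nat.card_coe_set_eq]; exact hWcard
    have e : W ≃ Fin (metricDim G) := Finite.equivFinOfCardEq hcard
    set S : Fin (metricDim G + 1) → Set V :=
      Fin.cases Wᶜ (fun j => {(e.symm j : V)}) with hS
    have hS0 : S 0 = Wᶜ := rfl
    have hSs : ∀ j, S j.succ = {(e.symm j : V)} := fun j => rfl
    refine Nat.sInf_le ⟨S, ?_, ?_, ?_, ?_⟩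
    · intro i
      induction i using Fin.cases with
      | zero => exact hc
      | succ j => exact ⟨_, rfl⟩
    · intro i j hij
      induction i using Fin.cases with
      | zero =>
        induction j using Fin.cases with
        | zero => exact absurd rfl hij
        | succ j =>
          rw [hS0, hSs]
          exact Set.disjoint_singleton_right.mpr (by simp [(e.symm j).2])
      | succ i =>
        induction j using Fin.cases with
        | zero =>
          rw [hS0, hSs]
          exact (Set.disjoint_singleton_right.mpr (by simp [(e.symm i).2])).symm
        | succ j =>
          rw [hSs, hSs, Set.disjoint_singleton]
          intro hcontra
          apply hij
          have : e.symm i = e.symm j := Subtype.ext hcontra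
          rw [e.symm.injective this]
    · apply Set.eq_univ_of_forall
      intro x
      rw [Set.mem_iUnion]
      by_cases hx : x ∈ W
      · exact ⟨(e ⟨x, hx⟩).succ, by rw [hSs]; simp⟩
      · exact ⟨0, hx⟩
    · intro u v h
      apply hWres
      intro w hw
      have := h ((e ⟨w, hw⟩).succ)
      rwa [hSs, Equiv.symm_apply_apply, hsingle, hsingle] at this
  · -- W = univ : partition into singletons
    have hWuniv : W = Set.univ := by
      rw [Set.not_nonempty_iff_eq_empty, Set.compl_empty_iff] at hc
      exact hc
    have hcard : Nat.card V = metricDim G := by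
      unfold metricDim; rw [← hWcard, hWuniv, Set.ncard_univ]
    have e : V ≃ Fin (metricDim G) := Finite.equivFinOfCardEq hcard
    have hle : partitionDim G ≤ metricDim G := by
      refine Nat.sInf_le ⟨fun i => {e.symm i}, ?_, ?_, ?_, ?_⟩
      · intro i; exact ⟨_, rfl⟩
      · intro i j hij
        rw [Set.disjoint_singleton]
        exact fun hcontra => hij (e.symm.injective hcontra)
      · apply Set.eq_univ_of_forall
        intro x
        rw [Set.mem_iUnion]
        exact ⟨e x, by simp⟩
      · intro u v h
        apply hWres
        intro w _
        have := h (e w)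
        simpa only [Equiv.symm_apply_apply, hsingle] using this
    exact hle.trans (Nat.le_succ _)
end

section
/- Suppose the incidence graph of a projective plane of order q has a resolving partition with r point-only classes, s line-only classes, and t mixed classes. Then (r+t)·2^{s+t-1} ≥ q²+q+1. -/
open Configuration

section Aux

open SimpleGraph Configuration.ProjectivePlane

variable {P L : Type*} [Membership P L]

lemma incGraph_adj_pl {p : P} {l : L} : (incGraph P L).Adj (Sum.inl p) (Sum.inr l) ↔ p ∈ l :=
  Iff.rfl

lemma incGraph_adj_lp {p : P} {l : L} : (incGraph P L).Adj (Sum.inr l) (Sum.inl p) ↔ p ∈ l :=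
  Iff.rfl

lemma incGraph_walk_parity {x y : P ⊕ L} (w : (incGraph P L).Walk x y) :
    Even w.length ↔ (x.isLeft = y.isLeft) := by
  induction w with
  | nil => simp
  | @cons u v z h w ih =>
    have hne : u.isLeft ≠ v.isLeft := by
      cases u <;> cases v <;> simp_all [incGraph]
    rw [SimpleGraph.Walk.length_cons, Nat.even_add_one, ih]
    cases hu : u.isLeft <;> cases hv : v.isLeft <;> cases hz : z.isLeft <;> simp_all

lemma incGraph_dist_pl_mem {p : P} {l : L} (h : p ∈ l) :
    (incGraph P L).dist (Sum.inl p) (Sum.inr l) = 1 :=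
  SimpleGraph.dist_eq_one_iff_adj.mpr h

lemma incGraph_dist_pp [Finite P] [Finite L] [ProjectivePlane P L] {p p' : P} (h : p ≠ p') :
    (incGraph P L).dist (Sum.inl p) (Sum.inl p') = 2 := by
  obtain ⟨h1, h2⟩ := Configuration.HasLines.mkLine_ax (L := L) h
  have a1 : (incGraph P L).Adj (Sum.inl p) (Sum.inr (Configuration.HasLines.mkLine (L := L) h)) := h1
  have a2 : (incGraph P L).Adj (Sum.inr (Configuration.HasLines.mkLine (L := L) h)) (Sum.inl p') := h2
  have hle : (incGraph P L).dist (Sum.inl p) (Sum.inl p') ≤ 2 :=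
    SimpleGraph.dist_le (SimpleGraph.Walk.cons a1 (SimpleGraph.Walk.cons a2 SimpleGraph.Walk.nil))
  have hreach : (incGraph P L).Reachable (Sum.inl p) (Sum.inl p') :=
    (SimpleGraph.Walk.cons a1 (SimpleGraph.Walk.cons a2 SimpleGraph.Walk.nil)).reachable
  have hpos := hreach.pos_dist_of_ne (by simp [h])
  have heven : Even ((incGraph P L).dist (Sum.inl p) (Sum.inl p')) := by
    obtain ⟨w', hw'⟩ := hreach.exists_walk_length_eq_dist
    rw [← hw']
    exact (incGraph_walk_parity w').mpr rfl
  rw [Nat.even_iff] at heven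
  omega

lemma incGraph_dist_pl_not_mem [Finite P] [Finite L] [ProjectivePlane P L] {p : P} {l : L}
    (h : p ∉ l) : (incGraph P L).dist (Sum.inl p) (Sum.inr l) = 3 := by
  have hlc : 0 < Configuration.lineCount L p := by
    have := Configuration.ProjectivePlane.two_lt_lineCount (L := L) p; omega
  rw [Configuration.lineCount] at hlc
  obtain ⟨⟨m, hm⟩⟩ := (Nat.card_pos_iff.mp hlc).1
  have hml : m ≠ l := fun e => h (e ▸ hm)
  obtain ⟨hx1, hx2⟩ := Configuration.HasPoints.mkPoint_ax (P := P) hml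
  have a1 : (incGraph P L).Adj (Sum.inl p) (Sum.inr m) := hm
  have a2 : (incGraph P L).Adj (Sum.inr m) (Sum.inl (Configuration.HasPoints.mkPoint (P := P) hml)) := hx1
  have a3 : (incGraph P L).Adj (Sum.inl (Configuration.HasPoints.mkPoint (P := P) hml)) (Sum.inr l) := hx2
  have hle : (incGraph P L).dist (Sum.inl p) (Sum.inr l) ≤ 3 :=
    SimpleGraph.dist_le (SimpleGraph.Walk.cons a1 (SimpleGraph.Walk.cons a2
      (SimpleGraph.Walk.cons a3 SimpleGraph.Walk.nil)))
  have hreach : (incGraph P L).Reachable (Sum.inl p) (Sum.inr l) :=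
    (SimpleGraph.Walk.cons a1 (SimpleGraph.Walk.cons a2
      (SimpleGraph.Walk.cons a3 SimpleGraph.Walk.nil))).reachable
  have hodd : ¬ Even ((incGraph P L).dist (Sum.inl p) (Sum.inr l)) := by
    obtain ⟨w', hw'⟩ := hreach.exists_walk_length_eq_dist
    rw [← hw']
    intro he
    simpa using (incGraph_walk_parity w').mp he
  have hne1 : (incGraph P L).dist (Sum.inl p) (Sum.inr l) ≠ 1 := by
    intro h1
    exact h (incGraph_adj_pl.mp (SimpleGraph.dist_eq_one_iff_adj.mp h1))
  rw [Nat.even_iff] at hodd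
  omega

lemma setDist_eq {V : Type*} (G : SimpleGraph V) (v : V) (T : Set V) (a : ℕ)
    (h1 : ∃ x ∈ T, G.dist v x = a) (h2 : ∀ x ∈ T, a ≤ G.dist v x) : setDist G v T = a := by
  apply IsLeast.csInf_eq
  constructor
  · obtain ⟨x, hx, hdx⟩ := h1
    exact ⟨x, hx, hdx⟩
  · rintro b ⟨x, hx, rfl⟩
    exact h2 x hx

end Aux

/-- If the incidence graph of a projective plane of order `q` has a resolving partition
with `r` point-only classes, `s` line-only classes and `t` mixed classes, then
`(r+t) * 2^(s+t-1) ≥ q² + q + 1`. -/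
theorem resolving_partition_lower_bound_points (P L : Type*) [Membership P L] [Fintype P]
    [Fintype L] [ProjectivePlane P L] (q : ℕ) (hq : ProjectivePlane.order P L = q)
    (h2 : 2 ≤ q) (r s t : ℕ) (S : Fin r ⊕ Fin s ⊕ Fin t → Set (P ⊕ L))
    (hres : IsResolvingPartition (incGraph P L) S)
    (hpt : ∀ i : Fin r, S (Sum.inl i) ⊆ Set.range Sum.inl)
    (hln : ∀ j : Fin s, S (Sum.inr (Sum.inl j)) ⊆ Set.range Sum.inr)
    (hmix : ∀ m : Fin t, (∃ p : P, Sum.inl p ∈ S (Sum.inr (Sum.inr m))) ∧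
      (∃ l : L, Sum.inr l ∈ S (Sum.inr (Sum.inr m)))) :
    q ^ 2 + q + 1 ≤ (r + t) * 2 ^ (s + t - 1) := by
  classical
  obtain ⟨hne, hdisj, hcov, hresolve⟩ := hres
  set G := incGraph P L with hG
  -- every point lies on some line
  have hline_ex : ∀ p : P, ∃ l : L, p ∈ l := by
    intro p
    have hlc : 0 < Configuration.lineCount L p := by
      have := Configuration.ProjectivePlane.two_lt_lineCount (L := L) p; omega
    rw [Configuration.lineCount] at hlc
    obtain ⟨⟨m, hm⟩⟩ := (Nat.card_pos_iff.mp hlc).1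
    exact ⟨m, hm⟩
  -- membership uniqueness
  have huniq : ∀ (x : P ⊕ L) i i', x ∈ S i → x ∈ S i' → i = i' := by
    intro x i i' hi hi'
    by_contra hne'
    exact Set.disjoint_left.mp (hdisj hne') hi hi'
  -- each vertex is in some class
  have hmem_class : ∀ x : P ⊕ L, ∃ i, x ∈ S i := by
    intro x
    have : x ∈ ⋃ i, S i := hcov ▸ Set.mem_univ x
    simpa using this
  -- the index map
  set ι : Fin r ⊕ Fin t → (Fin r ⊕ Fin s ⊕ Fin t) :=
    Sum.elim Sum.inl (fun m => Sum.inr (Sum.inr m)) with hι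
  -- each point's class is point-containing
  have hclass : ∀ p : P, ∃ c : Fin r ⊕ Fin t, Sum.inl p ∈ S (ι c) := by
    intro p
    obtain ⟨i, hi⟩ := hmem_class (Sum.inl p)
    rcases i with i0 | j0 | m0
    · exact ⟨Sum.inl i0, hi⟩
    · obtain ⟨l, hl⟩ := hln j0 hi
      exact absurd hl (by simp)
    · exact ⟨Sum.inr m0, hi⟩
  -- each line's class is line-containing
  have hlineclass : ∀ l : L, ∃ j : Fin s ⊕ Fin t, Sum.inr l ∈ S (Sum.inr j) := by
    intro l
    obtain ⟨i, hi⟩ := hmem_class (Sum.inr l)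
    rcases i with i0 | j
    · obtain ⟨p', hp'⟩ := hpt i0 hi
      exact absurd hp' (by simp)
    · exact ⟨j, hi⟩
  -- the "signature" of a point
  set A : P → Finset (Fin s ⊕ Fin t) := fun p =>
    Finset.univ.filter (fun j => ∃ l : L, Sum.inr l ∈ S (Sum.inr j) ∧ p ∈ l) with hA
  have hAmem : ∀ (p : P) (j : Fin s ⊕ Fin t),
      j ∈ A p ↔ ∃ l : L, Sum.inr l ∈ S (Sum.inr j) ∧ p ∈ l := by
    intro p j; simp [hA]
  -- setDist computations
  have hsd0 : ∀ (x : P ⊕ L) i, x ∈ S i → setDist G x (S i) = 0 := by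
    intro x i hx
    exact setDist_eq G x (S i) 0 ⟨x, hx, SimpleGraph.dist_self⟩ (fun _ _ => Nat.zero_le _)
  have hsd_pt : ∀ (p : P) (i : Fin r), Sum.inl p ∉ S (Sum.inl i) →
      setDist G (Sum.inl p) (S (Sum.inl i)) = 2 := by
    intro p i hp
    apply setDist_eq
    · obtain ⟨x, hx⟩ := hne (Sum.inl i)
      obtain ⟨p', rfl⟩ := hpt i hx
      refine ⟨Sum.inl p', hx, incGraph_dist_pp fun e => hp (by rw [e]; exact hx)⟩
    · intro y hy
      obtain ⟨p'', rfl⟩ := hpt i hy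
      rw [incGraph_dist_pp fun e => hp (by rw [e]; exact hy)]
  have hsd_near : ∀ (p : P) (j : Fin s ⊕ Fin t), Sum.inl p ∉ S (Sum.inr j) → j ∈ A p →
      setDist G (Sum.inl p) (S (Sum.inr j)) = 1 := by
    intro p j hp hj
    obtain ⟨l, hl, hpl⟩ := (hAmem p j).mp hj
    apply setDist_eq
    · exact ⟨Sum.inr l, hl, incGraph_dist_pl_mem hpl⟩
    · intro y hy
      rcases y with p' | l'
      · rw [incGraph_dist_pp fun e => hp (by rw [e]; exact hy)]; omega
      · by_cases hm : p ∈ l'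
        · rw [incGraph_dist_pl_mem hm]
        · rw [incGraph_dist_pl_not_mem hm]; omega
  have hsd_far_line : ∀ (p : P) (j : Fin s), (Sum.inl j : Fin s ⊕ Fin t) ∉ A p →
      setDist G (Sum.inl p) (S (Sum.inr (Sum.inl j))) = 3 := by
    intro p j hj
    rw [hAmem] at hj
    push_neg at hj
    apply setDist_eq
    · obtain ⟨x, hx⟩ := hne (Sum.inr (Sum.inl j))
      obtain ⟨l, rfl⟩ := hln j hx
      exact ⟨Sum.inr l, hx, incGraph_dist_pl_not_mem (hj l hx)⟩
    · intro y hy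
      obtain ⟨l, rfl⟩ := hln j hy
      rw [incGraph_dist_pl_not_mem (hj l hy)]
  have hsd_far_mixed : ∀ (p : P) (m : Fin t), Sum.inl p ∉ S (Sum.inr (Sum.inr m)) →
      (Sum.inr m : Fin s ⊕ Fin t) ∉ A p →
      setDist G (Sum.inl p) (S (Sum.inr (Sum.inr m))) = 2 := by
    intro p m hp hj
    rw [hAmem] at hj
    push_neg at hj
    apply setDist_eq
    · obtain ⟨p₀, hp₀⟩ := (hmix m).1
      exact ⟨Sum.inl p₀, hp₀, incGraph_dist_pp fun e => hp (by rw [e]; exact hp₀)⟩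
    · intro y hy
      rcases y with p' | l'
      · rw [incGraph_dist_pp fun e => hp (by rw [e]; exact hy)]
      · rw [incGraph_dist_pl_not_mem (hj l' hy)]; omega
  -- injectivity of A on each class
  have hinj : ∀ (c : Fin r ⊕ Fin t) (p p' : P), Sum.inl p ∈ S (ι c) → Sum.inl p' ∈ S (ι c) →
      A p = A p' → p = p' := by
    intro c p p' hp hp' hApp'
    have key : Sum.inl p = (Sum.inl p' : P ⊕ L) := by
      apply hresolve
      intro i
      by_cases hi : i = ι c
      · subst hi; rw [hsd0 _ _ hp, hsd0 _ _ hp']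
      · have hpn : Sum.inl p ∉ S i := fun h => hi (huniq _ _ _ h hp)
        have hpn' : Sum.inl p' ∉ S i := fun h => hi (huniq _ _ _ h hp')
        rcases i with i0 | j
        · rw [hsd_pt _ _ hpn, hsd_pt _ _ hpn']
        · by_cases hj : j ∈ A p
          · rw [hsd_near _ _ hpn hj, hsd_near _ _ hpn' (hApp' ▸ hj)]
          · have hj' : j ∉ A p' := fun h => hj (hApp' ▸ h)
            rcases j with j0 | m
            · rw [hsd_far_line _ _ hj, hsd_far_line _ _ hj']
            · rw [hsd_far_mixed _ _ hpn hj, hsd_far_mixed _ _ hpn' hj']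
    exact Sum.inl.inj key
  -- s + t ≥ 1
  have hP_ne : Nonempty P := by
    apply Fintype.card_pos_iff.mp
    rw [Configuration.ProjectivePlane.card_points P L]
    omega
  have hst : 1 ≤ s + t := by
    obtain ⟨p⟩ := hP_ne
    obtain ⟨l, _⟩ := hline_ex p
    obtain ⟨j, _⟩ := hlineclass l
    rcases j with j0 | m0
    · have := j0.pos; omega
    · have := m0.pos; omega
  -- the fibers
  set fib : Fin r ⊕ Fin t → Finset P :=
    fun c => Finset.univ.filter (fun p => Sum.inl p ∈ S (ι c)) with hfib
  have hfiber_card : ∀ c, (fib c).card ≤ 2 ^ (s + t - 1) := by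
    intro c
    have hinter : ((fib c).image A : Set (Finset (Fin s ⊕ Fin t))).Intersecting := by
      rintro a ha b hb
      simp only [Finset.coe_image, Set.mem_image, Finset.mem_coe, hfib,
        Finset.mem_filter] at ha hb
      obtain ⟨p, ⟨-, hp⟩, rfl⟩ := ha
      obtain ⟨p', ⟨-, hp'⟩, rfl⟩ := hb
      have hl_ex : ∃ l : L, p ∈ l ∧ p' ∈ l := by
        rcases eq_or_ne p p' with rfl | hpp
        · obtain ⟨l, hl⟩ := hline_ex p
          exact ⟨l, hl, hl⟩
        · exact ⟨_, Configuration.HasLines.mkLine_ax (L := L) hpp⟩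
      obtain ⟨l, hl1, hl2⟩ := hl_ex
      obtain ⟨j, hj⟩ := hlineclass l
      intro hd
      exact Finset.disjoint_left.mp hd ((hAmem p j).mpr ⟨l, hj, hl1⟩)
        ((hAmem p' j).mpr ⟨l, hj, hl2⟩)
    have hcard_eq : (fib c).card = ((fib c).image A).card := by
      rw [Finset.card_image_of_injOn]
      intro p hp p' hp' hApp'
      simp only [hfib, Finset.coe_filter, Set.mem_setOf_eq] at hp hp'
      exact hinj c p p' hp.2 hp'.2 hApp'
    have hle := hinter.card_le
    rw [Fintype.card_finset] at hle
    have hcard2 : Fintype.card (Fin s ⊕ Fin t) = s + t := by simp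
    rw [hcard2] at hle
    have hpow : 2 ^ (s + t) = 2 * 2 ^ (s + t - 1) := by
      conv_lhs => rw [show s + t = (s + t - 1) + 1 by omega]
      rw [pow_succ']
    omega
  -- put everything together
  have hcover : (Finset.univ : Finset P) ⊆ Finset.univ.biUnion fib := by
    intro p _
    obtain ⟨c, hc⟩ := hclass p
    exact Finset.mem_biUnion.mpr ⟨c, Finset.mem_univ _, by simp [hfib, hc]⟩
  have h1 : Fintype.card P ≤ ∑ c : Fin r ⊕ Fin t, (fib c).card := by
    calc Fintype.card P = (Finset.univ : Finset P).card := (Finset.card_univ).symm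
      _ ≤ (Finset.univ.biUnion fib).card := Finset.card_le_card hcover
      _ ≤ ∑ c : Fin r ⊕ Fin t, (fib c).card := Finset.card_biUnion_le
  have h2 : ∑ c : Fin r ⊕ Fin t, (fib c).card ≤ (r + t) * 2 ^ (s + t - 1) := by
    calc ∑ c : Fin r ⊕ Fin t, (fib c).card ≤ ∑ _c : Fin r ⊕ Fin t, 2 ^ (s + t - 1) :=
          Finset.sum_le_sum (fun c _ => hfiber_card c)
      _ = (r + t) * 2 ^ (s + t - 1) := by
          rw [Finset.sum_const, Finset.card_univ, Fintype.card_sum, smul_eq_mul]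
          simp
  have hcardP : Fintype.card P = q ^ 2 + q + 1 := by
    rw [Configuration.ProjectivePlane.card_points P L, hq]
  omega
end

section
/- If nonnegative integers r, s, t satisfy (s+t)·2^{r+t-1} ≥ N and (r+t)·2^{s+t-1} ≥ N where N = q²+q+1, then r+s+t ≥ 2·log₂(q) − 2·log₂(log₂(q+2)) − C for some absolute constant C (equivalently, r+s+t ≥ (2+o(1))·log₂ q). In particular, the minimum of r+s+t subject to these constraints is attained at r=s=0, where the constraint becomes t·2^{t-1} ≥ q²+q+1. -/
open Configuration

open Real

/-- Numerical optimization underlying the lower bound: there is an absolute constant `C`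
such that whenever nonnegative integers `r, s, t` satisfy `(s+t)·2^(r+t-1) ≥ N` and
`(r+t)·2^(s+t-1) ≥ N` with `N = q²+q+1`, `q ≥ 2`, then
`r+s+t ≥ 2·log₂ q − 2·log₂(log₂(q+2)) − C`. Moreover, at `r = s = 0` both constraints
become `t·2^(t-1) ≥ q²+q+1`. -/
theorem numeric_lower_bound :
    (∃ C : ℝ, 0 ≤ C ∧ ∀ q : ℕ, 2 ≤ q → ∀ r s t : ℕ,
      q ^ 2 + q + 1 ≤ (s + t) * 2 ^ (r + t - 1) →
      q ^ 2 + q + 1 ≤ (r + t) * 2 ^ (s + t - 1) →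
      2 * Real.logb 2 q - 2 * Real.logb 2 (Real.logb 2 (q + 2)) - C ≤ (r + s + t : ℝ)) ∧
    (∀ q t : ℕ, ((q ^ 2 + q + 1 ≤ (0 + t) * 2 ^ (0 + t - 1) ∧
      q ^ 2 + q + 1 ≤ (0 + t) * 2 ^ (0 + t - 1)) ↔ q ^ 2 + q + 1 ≤ t * 2 ^ (t - 1))) := by
  constructor
  · refine ⟨1, by norm_num, ?_⟩
    intro q hq r s t h1 _h2
    set m := r + s + t with hm
    have hm1 : 1 ≤ m := by
      rcases Nat.eq_zero_or_pos m with h0 | h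
      · exfalso
        have hs : s + t = 0 := by omega
        rw [hs, Nat.zero_mul] at h1
        exact absurd (Nat.le_zero.mp h1) (by positivity : 0 < q ^ 2 + q + 1).ne'
      · exact h
    have hkey : (q : ℝ) ^ 2 ≤ (m : ℝ) * 2 ^ m := by
      have h1' : q ^ 2 ≤ (s + t) * 2 ^ (r + t - 1) := le_trans (by omega) h1
      have h2' : (s + t) * 2 ^ (r + t - 1) ≤ m * 2 ^ m :=
        Nat.mul_le_mul (by omega) (Nat.pow_le_pow_right (by norm_num) (by omega))
      exact_mod_cast le_trans h1' h2'
    have hq1 : (1 : ℝ) < q := by exact_mod_cast hq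
    have hq2 : (2 : ℝ) ≤ q := by exact_mod_cast hq
    have hmr : (m : ℝ) = (r : ℝ) + s + t := by push_cast [hm]; ring
    have hmpos : (0 : ℝ) < m := by exact_mod_cast hm1
    have hL : 1 ≤ logb 2 (q : ℝ) := by
      rw [show (1 : ℝ) = logb 2 2 from (logb_self_eq_one one_lt_two).symm]
      exact logb_le_logb_of_le one_lt_two (by norm_num) (by exact_mod_cast hq)
    have hLL : 0 ≤ logb 2 (logb 2 ((q : ℝ) + 2)) := by
      have h4 : (2 : ℝ) ≤ logb 2 ((q : ℝ) + 2) := by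
        have e4 : logb 2 ((2 : ℝ) ^ 2) = 2 := by
          rw [logb_pow, logb_self_eq_one one_lt_two]; ring
        calc (2 : ℝ) = logb 2 ((2 : ℝ) ^ 2) := e4.symm
          _ ≤ logb 2 ((q : ℝ) + 2) :=
            logb_le_logb_of_le one_lt_two (by norm_num) (by nlinarith [hq2])
      exact logb_nonneg one_lt_two (by linarith)
    rcases le_or_gt (2 * logb 2 (q : ℝ)) (m : ℝ) with hcase | hcase
    · linarith
    · -- m < 2 logb 2 q
      have hlog : logb 2 ((q : ℝ) ^ 2) ≤ logb 2 ((m : ℝ) * 2 ^ m) :=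
        logb_le_logb_of_le one_lt_two (by positivity) hkey
      have e1 : logb 2 ((q : ℝ) ^ 2) = 2 * logb 2 (q : ℝ) := by
        rw [logb_pow]; norm_num
      have e2 : logb 2 ((m : ℝ) * 2 ^ m) = logb 2 (m : ℝ) + m := by
        rw [logb_mul hmpos.ne' (by positivity), logb_pow, logb_self_eq_one one_lt_two]
        ring
      have h3 : logb 2 (m : ℝ) ≤ logb 2 (2 * logb 2 (q : ℝ)) :=
        logb_le_logb_of_le one_lt_two hmpos hcase.le
      have e3 : logb 2 (2 * logb 2 (q : ℝ)) = 1 + logb 2 (logb 2 (q : ℝ)) := by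
        rw [logb_mul (by norm_num) (by linarith), logb_self_eq_one one_lt_two]
      have h5 : logb 2 (logb 2 (q : ℝ)) ≤ logb 2 (logb 2 ((q : ℝ) + 2)) := by
        apply logb_le_logb_of_le one_lt_two (by linarith)
        exact logb_le_logb_of_le one_lt_two (by linarith) (by linarith)
      rw [e1, e2] at hlog
      rw [e3] at h3
      linarith
  · intro q t
    simp
end

section
/- Let Π be a projective plane of order q, P₀ a point, ℓ₀ a line through P₀. Fix a 'major point' P_i ≠ P₀ on ℓ₀ and a 'major line' ℓ_j ≠ ℓ₀ through P₀. Let A ∪ B be a partition of the q points of ℓ_j \ {P₀} with |A| = ⌊q/2⌋, and let H consist of the points of A together with all lines joining P_i to a point of B. Then |H| = q (if q is even), and for any point Q not on ℓ_j and not equal to P_i: d(Q, H) = 1 if the line P_iQ passes through a point of B, and d(Q, H) = 2 or less otherwise; in particular if Q, Q' are points such that the lines P_iQ and P_iQ' are distinct, exactly one of which joins P_i to B while the other meets ℓ_j in A ∪ {P₀} with Q, Q' ∉ H, then d(Q,H) ≠ d(Q',H). -/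
open Configuration

set_option linter.unusedSectionVars false
section Aux
open ProjectivePlane

variable {P L : Type*} [Membership P L]

lemma incAdj_pl {p : P} {l : L} (h : p ∈ l) : (incGraph P L).Adj (Sum.inl p) (Sum.inr l) := h
lemma incAdj_lp {p : P} {l : L} (h : p ∈ l) : (incGraph P L).Adj (Sum.inr l) (Sum.inl p) := h

lemma not_adj_pp (p a : P) : ¬ (incGraph P L).Adj (Sum.inl p) (Sum.inl a) := fun h => h

variable [Fintype P] [Fintype L] [ProjectivePlane P L]

lemma exists_mem_ne (l : L) (p : P) : ∃ x, x ∈ l ∧ x ≠ p := by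
  have h := two_lt_pointCount P l
  rw [pointCount] at h
  have : Nontrivial {q : P // q ∈ l} := by rw [← Finite.one_lt_card_iff_nontrivial]; omega
  obtain ⟨⟨a, ha⟩, ⟨b, hb⟩, hab⟩ := this
  have hab' : a ≠ b := fun h => hab (Subtype.ext h)
  by_cases hpa : a = p
  · exact ⟨b, hb, fun h => hab' (by rw [hpa, h])⟩
  · exact ⟨a, ha, hpa⟩

lemma dist_pp_le_two (p a : P) :
    (incGraph P L).dist (Sum.inl p) (Sum.inl a) ≤ 2 := by
  by_cases h : p = a
  · subst h; simp [SimpleGraph.dist_self]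
  · obtain ⟨hp, ha⟩ := HasLines.mkLine_ax (L := L) h
    exact (SimpleGraph.dist_le
      (SimpleGraph.Walk.cons (incAdj_pl hp) ((SimpleGraph.Walk.cons (incAdj_lp ha))
        SimpleGraph.Walk.nil)))

lemma reach_pp (p a : P) : (incGraph P L).Reachable (Sum.inl p) (Sum.inl a) := by
  by_cases h : p = a
  · subst h; rfl
  · obtain ⟨hp, ha⟩ := HasLines.mkLine_ax (L := L) h
    exact ((incAdj_pl hp).reachable).trans (incAdj_lp ha).reachable

lemma reach_pl (p : P) (l : L) : (incGraph P L).Reachable (Sum.inl p) (Sum.inr l) := by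
  by_cases h : p ∈ l
  · exact (incAdj_pl h).reachable
  · obtain ⟨x, hx, hxp⟩ := exists_mem_ne l p
    exact (reach_pp p x).trans (incAdj_pl hx).reachable

lemma reach_px (p : P) (x : P ⊕ L) : (incGraph P L).Reachable (Sum.inl p) x := by
  cases x with
  | inl a => exact reach_pp p a
  | inr l => exact reach_pl p l

end Aux

lemma setDist_le {V : Type*} (G : SimpleGraph V) {v x : V} {S : Set V} (hx : x ∈ S) :
    setDist G v S ≤ G.dist v x :=
  Nat.sInf_le ⟨x, hx, rfl⟩

lemma setDist_eq_one {V : Type*} (G : SimpleGraph V) {v : V} {S : Set V} (hv : v ∉ S)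
    (hreach : ∀ x ∈ S, G.Reachable v x) (h1 : ∃ x ∈ S, G.Adj v x) : setDist G v S = 1 := by
  obtain ⟨x, hxS, hadj⟩ := h1
  refine le_antisymm ?_ ?_
  · calc setDist G v S ≤ G.dist v x := setDist_le G hxS
      _ = 1 := SimpleGraph.dist_eq_one_iff_adj.mpr hadj
  · refine le_csInf ⟨_, x, hxS, rfl⟩ ?_
    rintro m ⟨y, hyS, rfl⟩
    rw [Nat.one_le_iff_ne_zero]
    intro h0
    rw [(hreach y hyS).dist_eq_zero_iff] at h0
    exact hv (h0 ▸ hyS)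

lemma setDist_ne_one {V : Type*} (G : SimpleGraph V) {v : V} {S : Set V}
    (h1 : ∀ x ∈ S, ¬ G.Adj v x) (hS : S.Nonempty) : setDist G v S ≠ 1 := by
  intro h
  have hne : (G.dist v '' S).Nonempty := hS.image _
  have := Nat.sInf_mem hne
  rw [setDist] at h
  rw [h] at this
  obtain ⟨x, hxS, hx⟩ := this
  exact h1 x hxS (SimpleGraph.dist_eq_one_iff_adj.mp hx)

/-- Properties of a ζ-set `H` built from a major point `P_i`, a major line `ℓ_j`, and a
partition `A ∪ B` of the points of `ℓ_j` other than `P₀` with `|A| = ⌊q/2⌋`: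
its size is `q` when `q` is even, distances of generic points to `H`, and the separation
property for pairs of points whose joining lines with `P_i` behave differently. -/
theorem zeta_set_properties (P L : Type*) [Membership P L] [Fintype P] [Fintype L]
    [ProjectivePlane P L] (q : ℕ) (hq : ProjectivePlane.order P L = q) (h2 : 2 ≤ q)
    (P₀ Pᵢ : P) (ℓ₀ lj : L) (h00 : P₀ ∈ ℓ₀) (hi0 : Pᵢ ∈ ℓ₀) (hiP : Pᵢ ≠ P₀)
    (hj0 : P₀ ∈ lj) (hjl : lj ≠ ℓ₀)
    (A B : Set P) (hAB : A ∪ B = {x : P | x ∈ lj ∧ x ≠ P₀}) (hdisj : Disjoint A B)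
    (hA : A.ncard = q / 2)
    (H : Set (P ⊕ L))
    (hH : H = Sum.inl '' A ∪ Sum.inr '' {l : L | Pᵢ ∈ l ∧ ∃ b ∈ B, b ∈ l}) :
    (Even q → H.ncard = q) ∧
    (∀ Q : P, Q ∉ lj → Q ≠ Pᵢ →
      (((∃ l : L, Pᵢ ∈ l ∧ Q ∈ l ∧ ∃ b ∈ B, b ∈ l) →
          setDist (incGraph P L) (Sum.inl Q) H = 1) ∧
        (¬ (∃ l : L, Pᵢ ∈ l ∧ Q ∈ l ∧ ∃ b ∈ B, b ∈ l) →
          setDist (incGraph P L) (Sum.inl Q) H ≤ 2))) ∧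
    (∀ (Q Q' : P) (m m' : L), Q ≠ Pᵢ → Q' ≠ Pᵢ → m ≠ m' →
      Pᵢ ∈ m → Q ∈ m → Pᵢ ∈ m' → Q' ∈ m' →
      (∃ b ∈ B, b ∈ m) → (∀ x : P, x ∈ m' → x ∈ lj → x ∈ A ∪ {P₀}) →
      Sum.inl Q ∉ H → Sum.inl Q' ∉ H →
      setDist (incGraph P L) (Sum.inl Q) H ≠ setDist (incGraph P L) (Sum.inl Q') H) := by
  have hPi_lj : Pᵢ ∉ lj := by
    intro h
    rcases Nondegenerate.eq_or_eq hj0 h h00 hi0 with h' | h'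
    · exact hiP h'.symm
    · exact hjl h'
  have hAlj : ∀ a ∈ A, a ∈ lj ∧ a ≠ P₀ := by
    intro a ha
    have : a ∈ A ∪ B := Or.inl ha
    rw [hAB] at this; exact this
  have hBlj : ∀ b ∈ B, b ∈ lj ∧ b ≠ P₀ := by
    intro b hb
    have : b ∈ A ∪ B := Or.inr hb
    rw [hAB] at this; exact this
  -- cardinality of B
  have hSetcard : ({x : P | x ∈ lj ∧ x ≠ P₀} : Set P).ncard = q := by
    have h1 : ({x : P | x ∈ lj} : Set P).ncard = q + 1 := by
      have h := ProjectivePlane.pointCount_eq P lj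
      rw [hq] at h
      rw [← Nat.card_coe_set_eq]
      exact h
    have h2' : ({x : P | x ∈ lj ∧ x ≠ P₀} : Set P) = {x : P | x ∈ lj} \ {P₀} := by
      ext x; simp [Set.mem_diff]
    rw [h2', Set.ncard_diff_singleton_of_mem (show P₀ ∈ {x : P | x ∈ lj} from hj0), h1]
    omega
  have hBcard : B.ncard = q - q / 2 := by
    have h := Set.ncard_union_eq hdisj (Set.toFinite A) (Set.toFinite B)
    rw [hAB, hSetcard, hA] at h
    omega
  refine ⟨?_, ?_, ?_⟩
  · -- size of H
    intro _
    have hd2 : Disjoint (Sum.inl '' A : Set (P ⊕ L))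
        (Sum.inr '' {l : L | Pᵢ ∈ l ∧ ∃ b ∈ B, b ∈ l}) := by
      rw [Set.disjoint_left]
      rintro x ⟨a, -, rfl⟩ ⟨l, -, h⟩
      cases h
    classical
    set f : P → L := fun b => if h : Pᵢ = b then lj else HasLines.mkLine h with hf
    have hfB : ∀ b ∈ B, Pᵢ ∈ f b ∧ b ∈ f b := by
      intro b hb
      have hne : Pᵢ ≠ b := fun h => hPi_lj (h ▸ (hBlj b hb).1)
      simp only [hf, dif_neg hne]
      exact HasLines.mkLine_ax hne
    have hflj : ∀ b ∈ B, f b ≠ lj := fun b hb h => hPi_lj (h ▸ (hfB b hb).1)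
    have himg : f '' B = {l : L | Pᵢ ∈ l ∧ ∃ b ∈ B, b ∈ l} := by
      ext l
      constructor
      · rintro ⟨b, hb, rfl⟩
        exact ⟨(hfB b hb).1, b, hb, (hfB b hb).2⟩
      · rintro ⟨hPil, b, hb, hbl⟩
        refine ⟨b, hb, ?_⟩
        have hne : Pᵢ ≠ b := fun h => hPi_lj (h ▸ (hBlj b hb).1)
        rcases Nondegenerate.eq_or_eq (hfB b hb).1 (hfB b hb).2 hPil hbl with h | h
        · exact absurd h hne
        · exact h
    have hinj : Set.InjOn f B := by
      intro b hb b' hb' he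
      rcases Nondegenerate.eq_or_eq (hfB b hb).2 (he ▸ (hfB b' hb').2) (hBlj b hb).1
        (hBlj b' hb').1 with h | h
      · exact h
      · exact absurd h (hflj b hb)
    rw [hH, Set.ncard_union_eq hd2 (Set.toFinite _) (Set.toFinite _),
      Set.ncard_image_of_injective _ Sum.inl_injective,
      Set.ncard_image_of_injective _ Sum.inr_injective, hA, ← himg,
      Set.ncard_image_of_injOn hinj, hBcard]
    omega
  · -- distances of generic points
    intro Q hQlj hQPi
    have hQA : Q ∉ A := fun h => hQlj (hAlj Q h).1
    have hQnotH : Sum.inl Q ∉ H := by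
      rw [hH]
      rintro (⟨a, ha, hae⟩ | ⟨l', -, hle⟩)
      · obtain rfl := Sum.inl_injective hae
        exact hQA ha
      · cases hle
    constructor
    · rintro ⟨l, hPil, hQl, b, hbB, hbl⟩
      refine setDist_eq_one _ hQnotH (fun x _ => reach_px Q x) ⟨Sum.inr l, ?_, incAdj_pl hQl⟩
      rw [hH]
      exact Or.inr ⟨l, ⟨hPil, b, hbB, hbl⟩, rfl⟩
    · intro _
      have hAne : A.Nonempty := by
        apply Set.nonempty_of_ncard_ne_zero
        omega
      obtain ⟨a, haA⟩ := hAne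
      have hmem : Sum.inl a ∈ H := by
        rw [hH]; exact Or.inl ⟨a, haA, rfl⟩
      calc setDist (incGraph P L) (Sum.inl Q) H ≤ (incGraph P L).dist (Sum.inl Q) (Sum.inl a) :=
            setDist_le _ hmem
        _ ≤ 2 := dist_pp_le_two Q a
  · -- separation
    intro Q Q' m m' hQPi hQ'Pi hmm' hPim hQm hPim' hQ'm' hBm hm'A hQH hQ'H
    obtain ⟨b, hbB, hbm⟩ := hBm
    have hmH : Sum.inr m ∈ H := by
      rw [hH]; exact Or.inr ⟨m, ⟨hPim, b, hbB, hbm⟩, rfl⟩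
    have hd1 : setDist (incGraph P L) (Sum.inl Q) H = 1 :=
      setDist_eq_one _ hQH (fun x _ => reach_px Q x) ⟨Sum.inr m, hmH, incAdj_pl hQm⟩
    have hd2 : setDist (incGraph P L) (Sum.inl Q') H ≠ 1 := by
      refine setDist_ne_one _ ?_ ⟨Sum.inr m, hmH⟩
      intro x hx hadj
      rw [hH] at hx
      rcases hx with ⟨a, -, rfl⟩ | ⟨l, ⟨hPil, c, hcB, hcl⟩, rfl⟩
      · exact hadj
      · have hQ'l : Q' ∈ l := hadj
        rcases Nondegenerate.eq_or_eq hPil hQ'l hPim' hQ'm' with h | h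
        · exact hQ'Pi h.symm
        · subst h
          rcases hm'A c hcl (hBlj c hcB).1 with hc | hc
          · exact Set.disjoint_left.mp hdisj hc hcB
          · exact (hBlj c hcB).2 hc
    intro h
    rw [hd1] at h
    exact hd2 h.symm
end

section
/- For all integers q ≥ 4 and 1 ≤ k ≤ q, the inequality ((q−k+1)/(q+1))·((q−2)/(2q−2))^k + (k/(q+1))·((q−1)/q)·((q−2)/(2q−2))^{k−1} < (1/2)^k holds. -/
open Configuration

/-- The elementary inequality from the probabilistic separation argument: for integers
`q ≥ 4` and `1 ≤ k ≤ q`,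
`((q−k+1)/(q+1))·((q−2)/(2q−2))^k + (k/(q+1))·((q−1)/q)·((q−2)/(2q−2))^{k−1} < (1/2)^k`. -/
theorem zeta_probability_inequality (q k : ℕ) (hq : 4 ≤ q) (hk : 1 ≤ k) (hkq : k ≤ q) :
    ((q : ℝ) - k + 1) / (q + 1) * (((q : ℝ) - 2) / (2 * q - 2)) ^ k
      + (k : ℝ) / (q + 1) * (((q : ℝ) - 1) / q * (((q : ℝ) - 2) / (2 * q - 2)) ^ (k - 1))
      < (1 / 2 : ℝ) ^ k := by
  have hq4 : (4:ℝ) ≤ (q:ℝ) := by exact_mod_cast hq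
  obtain ⟨m, rfl⟩ : ∃ m, k = m + 1 := ⟨k - 1, (Nat.succ_pred_eq_of_pos hk).symm⟩
  set Q : ℝ := (q:ℝ) with hQdef
  have hQ1 : (0:ℝ) < Q - 1 := by linarith
  have hQ0 : (0:ℝ) < Q := by linarith
  have hQp1 : (0:ℝ) < Q + 1 := by linarith
  have hM0 : (0:ℝ) ≤ (m:ℝ) := Nat.cast_nonneg m
  have hMQ : (m:ℝ) + 1 ≤ Q := by
    have := (Nat.cast_le (α := ℝ)).mpr hkq
    push_cast at this; linarith
  obtain ⟨t, htdef⟩ : ∃ t : ℝ, t = (Q - 2) / (Q - 1) := ⟨_, rfl⟩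
  have ht0 : 0 ≤ t := by rw [htdef]; exact div_nonneg (by linarith) hQ1.le
  have htpow : ∀ n : ℕ, t ^ n ≤ (Q - 1) / (Q - 1 + n) := by
    intro n
    induction n with
    | zero => simp [div_self hQ1.ne']
    | succ n ih =>
      have hn0 : (0:ℝ) ≤ (n:ℝ) := Nat.cast_nonneg n
      have hd : (0:ℝ) < Q - 1 + n := by linarith
      have hd' : (0:ℝ) < Q - 1 + (n + 1 : ℕ) := by push_cast; linarith
      calc t ^ (n+1) = t * t ^ n := by ring
        _ ≤ t * ((Q - 1) / (Q - 1 + n)) := mul_le_mul_of_nonneg_left ih ht0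
        _ ≤ (Q - 1) / (Q - 1 + (n + 1 : ℕ)) := by
            rw [htdef, div_mul_div_comm, div_le_div_iff₀ (by positivity) hd']
            push_cast
            nlinarith
  have hr : (Q - 2) / (2 * Q - 2) = t / 2 := by
    rw [htdef, div_div]; ring_nf
  have hdm : (0:ℝ) < Q - 1 + m := by linarith
  have hT' : t ^ m * (Q - 1 + m) ≤ Q - 1 := by
    rw [← le_div_iff₀ hdm]; exact htpow m
  have hT0 : (0:ℝ) ≤ t ^ m := pow_nonneg ht0 m
  have main : (Q - ((m:ℝ) + 1) + 1) / (Q + 1) * (t ^ m * t)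
      + ((m:ℝ) + 1) / (Q + 1) * ((Q - 1) / Q) * (2 * t ^ m) < 1 := by
    revert hT' hT0
    generalize t ^ m = T
    intro hT' hT0
    rw [htdef]
    have hCpos : (0:ℝ) ≤ (Q - (m:ℝ)) * (Q - 2) * Q + 2 * ((m:ℝ) + 1) * (Q - 1)^2 := by
      nlinarith
    have hpoly : ((Q - (m:ℝ)) * (Q - 2) * Q + 2 * ((m:ℝ) + 1) * (Q - 1)^2)
        < Q * (Q + 1) * (Q - 1 + (m:ℝ)) := by nlinarith
    field_simp
    nlinarith [mul_le_mul_of_nonneg_left hT' hCpos, mul_lt_mul_of_pos_right hpoly hQ1,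
      mul_pos hQ0 hQp1, hT0, mul_nonneg hT0 hdm.le, hdm, mul_pos hdm hQp1]
  have h2m : (0:ℝ) < (2:ℝ) ^ m := by positivity
  have e : ((q:ℝ) - (↑(m+1):ℝ) + 1) / ((q:ℝ) + 1) * (((q:ℝ) - 2) / (2 * (q:ℝ) - 2)) ^ (m+1)
      + ((↑(m+1):ℝ)) / ((q:ℝ) + 1) * (((q:ℝ) - 1) / (q:ℝ) * (((q:ℝ) - 2) / (2 * (q:ℝ) - 2)) ^ (m + 1 - 1))
      = 1 / (2 ^ m * 2) * ((Q - ((m:ℝ) + 1) + 1) / (Q + 1) * (t ^ m * t)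
          + ((m:ℝ) + 1) / (Q + 1) * ((Q - 1) / Q) * (2 * t ^ m)) := by
    simp only [Nat.add_sub_cancel]
    rw [hr, div_pow, div_pow, pow_succ t, pow_succ (2:ℝ)]
    push_cast
    field_simp
    ring
  rw [e]
  have e2 : (1/2 : ℝ) ^ (m+1) = 1 / (2 ^ m * 2) * 1 := by
    rw [div_pow, one_pow, pow_succ]; ring
  rw [e2]
  exact mul_lt_mul_of_pos_left main (by positivity)
end
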